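/- Let h be a Γ-equivariant continuous hermitian metric, let F ⊆ G be a measurable fundamental domain for the left translation action of Γ on G, and let ψ : G → ℝ be a continuous function such that ∫_F h(x)(φ(xg), φ(xg)) dμ(x) ≤ ψ(g) · ∫_F h(x)(φ(x), φ(x)) dμ(x) for all g ∈ G and all continuous Γ-equivariant φ : G → V. Then for every continuous compactly supported f : G → ℂ and every continuous Γ-equivariant φ : G → V with finite L²-norm, the function R(f)φ : x ↦ ∫_G f(y) φ(xy) dμ(y) is Γ-equivariant and satisfies ( ∫_F h(x)((R(f)φ)(x), (R(f)φ)(x)) dμ(x) )^{1/2} ≤ ( ∫_G |f(g)| ψ(g)^{1/2} dμ(g) ) · ( ∫_F h(x)(φ(x), φ(x)) dμ(x) )^{1/2}. In particular R(f) extends to a bounded operator on the Hilbert space L²(Γ\G, χ). -/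

import Mathlib

open MeasureTheory ComplexConjugate
open scoped Pointwise

/-- A `Γ`-equivariant continuous hermitian metric on the trivial `V`-bundle over `G`:
a continuous assignment `g ↦ h g` of a hermitian inner product on `V`
(conjugate-linear in the first variable, linear in the second) satisfying
`h (γ * g) (χ γ v) (χ γ w) = h g v w`. -/
def IsEquivariantHermitianMetric {G V : Type*} [Group G] [TopologicalSpace G]
    [NormedAddCommGroup V] [NormedSpace ℂ V]
    (Γ : Subgroup G) (χ : Γ →* (V →ₗ[ℂ] V)ˣ) (h : G → V → V → ℂ) : Prop :=
  Continuous (fun p : G × V × V => h p.1 p.2.1 p.2.2) ∧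
  (∀ (g : G) (v w w' : V), h g v (w + w') = h g v w + h g v w') ∧
  (∀ (g : G) (a : ℂ) (v w : V), h g v (a • w) = a * h g v w) ∧
  (∀ (g : G) (v w : V), h g w v = (starRingEnd ℂ) (h g v w)) ∧
  (∀ (g : G) (v : V), v ≠ 0 → 0 < (h g v v).re) ∧
  (∀ (γ : Γ) (g : G) (v w : V),
    h ((γ : G) * g) ((χ γ : V →ₗ[ℂ] V) v) ((χ γ : V →ₗ[ℂ] V) w) = h g v w)

private lemma herm_cs {V : Type*} [AddCommGroup V] [Module ℂ V]
    (B : V → V → ℂ)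
    (hadd : ∀ v w w', B v (w + w') = B v w + B v w')
    (hsmul : ∀ (a : ℂ) (v w : V), B v (a • w) = a * B v w)
    (hsym : ∀ v w, B w v = conj (B v w))
    (hpos : ∀ v, v ≠ 0 → 0 < (B v v).re)
    (v w : V) :
    ‖B v w‖ ≤ Real.sqrt (B v v).re * Real.sqrt (B w w).re := by
  have hzero : ∀ u : V, B u 0 = 0 := by
    intro u
    have := hsmul 0 u 0
    simpa using this
  have hzerol : ∀ u : V, B 0 u = 0 := by
    intro u; rw [hsym, hzero]; simp
  have hselfre : ∀ u : V, conj (B u u) = B u u := fun u => (hsym u u).symm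
  have hnn : ∀ u : V, 0 ≤ (B u u).re := by
    intro u
    rcases eq_or_ne u 0 with rfl | hu
    · simp [hzero]
    · exact (hpos u hu).le
  rcases eq_or_ne w 0 with rfl | hw
  · simp [hzero]
  set c : ℝ := (B w w).re with hc
  have hcpos : 0 < c := hpos w hw
  have hww : B w w = (c : ℂ) := by
    have him : (B w w).im = 0 := by
      have h1 := congrArg Complex.im (hselfre w)
      simp only [Complex.conj_im] at h1
      linarith
    exact Complex.ext rfl him
  set b : ℂ := B w v with hb
  set t : ℂ := b / (c : ℂ) with ht
  set u : V := v + (-t) • w with hu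
  -- first-argument rules
  have haddl : ∀ x y z : V, B (x + y) z = B x z + B y z := by
    intro x y z
    rw [hsym, hadd, map_add, ← hsym, ← hsym]
  have hsmull : ∀ (a : ℂ) (x z : V), B (a • x) z = conj a * B x z := by
    intro a x z
    rw [hsym, hsmul, map_mul, ← hsym]
  have hexp : B u u = B v v - conj t * b - t * conj b + t * conj t * (c : ℂ) := by
    have e1 : B u u = B u v + (-t) * B u w := by
      rw [hu]
      rw [hadd, hsmul]
    have e2 : B u v = B v v + conj (-t) * B w v := by
      rw [hu, haddl, hsmull]
    have e3 : B u w = B v w + conj (-t) * B w w := by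
      rw [hu, haddl, hsmull]
    have e4 : B v w = conj b := by rw [hb, hsym]
    rw [e1, e2, e3, e4, hww]
    simp only [map_neg]
    ring
  have hbb : b * conj b = (Complex.normSq b : ℂ) := Complex.mul_conj b
  have hc0 : (c : ℂ) ≠ 0 := by exact_mod_cast hcpos.ne'
  have hexp2 : B u u = B v v - ((Complex.normSq b / c : ℝ) : ℂ) := by
    rw [hexp, ht]
    rw [map_div₀, Complex.conj_ofReal]
    push_cast
    field_simp
    linear_combination (-1 : ℂ) * hbb
  have hre : 0 ≤ (B u u).re := hnn u
  have hre2 : (B u u).re = (B v v).re - Complex.normSq b / c := by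
    rw [hexp2]; simp
  have hkey : Complex.normSq b ≤ (B v v).re * c := by
    rw [hre2] at hre
    have : Complex.normSq b / c ≤ (B v v).re := by linarith
    calc Complex.normSq b = Complex.normSq b / c * c := by field_simp
    _ ≤ (B v v).re * c := by
        apply mul_le_mul_of_nonneg_right this hcpos.le
  have habs : ‖B v w‖ = Real.sqrt (Complex.normSq b) := by
    rw [show B v w = conj b by rw [hb, hsym], Complex.norm_def, Complex.normSq_conj]
  rw [habs, ← Real.sqrt_mul (hnn v)]
  exact Real.sqrt_le_sqrt hkey

/-- `L²`-boundedness of `R(f)`: if `ψ` dominates right translations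
in the `L²`-norm, then for `f` continuous with compact support and `φ` continuous,
`Γ`-equivariant with finite `L²`-norm, `R(f)φ : x ↦ ∫_G f y • φ (x y) dμ y` is
`Γ`-equivariant and `‖R(f)φ‖ ≤ (∫_G |f g| √(ψ g) dμ g) * ‖φ‖`. -/
theorem convolution_operator_L2_bound
    {G V : Type*} [Group G] [TopologicalSpace G] [IsTopologicalGroup G]
    [LocallyCompactSpace G] [T2Space G] [SecondCountableTopology G]
    [MeasurableSpace G] [BorelSpace G] (μ : Measure G)
    [μ.IsHaarMeasure] [μ.IsMulRightInvariant]
    [NormedAddCommGroup V] [NormedSpace ℂ V] [FiniteDimensional ℂ V] [Nontrivial V]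
    (Γ : Subgroup G) [DiscreteTopology Γ]
    (hcocompact : ∃ C : Set G, IsCompact C ∧ ∀ g : G, ∃ γ ∈ Γ, γ * g ∈ C)
    (χ : Γ →* (V →ₗ[ℂ] V)ˣ)
    (h : G → V → V → ℂ) (hh : IsEquivariantHermitianMetric Γ χ h)
    (F : Set G) (hF : IsFundamentalDomain Γ F μ)
    (ψ : G → ℝ) (hψ : Continuous ψ)
    (hψdom : ∀ (g : G) (φ : G → V), Continuous φ →
      (∀ (γ : Γ) (x : G), φ ((γ : G) * x) = (χ γ : V →ₗ[ℂ] V) (φ x)) →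
      (∫ x in F, (h x (φ (x * g)) (φ (x * g))).re ∂μ) ≤
        ψ g * ∫ x in F, (h x (φ x) (φ x)).re ∂μ)
    (f : G → ℂ) (hf : Continuous f) (hfsupp : HasCompactSupport f)
    (φ : G → V) (hφ : Continuous φ)
    (hφeq : ∀ (γ : Γ) (x : G), φ ((γ : G) * x) = (χ γ : V →ₗ[ℂ] V) (φ x))
    (hφL2 : IntegrableOn (fun x => (h x (φ x) (φ x)).re) F μ) :
    (∀ (γ : Γ) (x : G),
        (∫ y, f y • φ (((γ : G) * x) * y) ∂μ) =
          (χ γ : V →ₗ[ℂ] V) (∫ y, f y • φ (x * y) ∂μ)) ∧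
    Real.sqrt (∫ x in F,
        (h x (∫ y, f y • φ (x * y) ∂μ) (∫ y, f y • φ (x * y) ∂μ)).re ∂μ) ≤
      (∫ g, ‖f g‖ * Real.sqrt (ψ g) ∂μ) *
        Real.sqrt (∫ x in F, (h x (φ x) (φ x)).re ∂μ) := by
  classical
  obtain ⟨hcont, haddh, hsmulh, hsymh, hposh, hequivh⟩ := hh
  have hzero : ∀ (x : G) (v : V), h x v 0 = 0 := by
    intro x v; have := hsmulh x 0 v 0; simpa using this
  have hnn : ∀ (x : G) (v : V), 0 ≤ (h x v v).re := by
    intro x v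
    rcases eq_or_ne v 0 with rfl | hv
    · simp [hzero]
    · exact (hposh x v hv).le
  have hCS : ∀ (x : G) (v w : V),
      ‖h x v w‖ ≤ Real.sqrt (h x v v).re * Real.sqrt (h x w w).re := fun x =>
    herm_cs (h x) (haddh x) (fun a v w => hsmulh x a v w) (fun v w => hsymh x v w) (hposh x)
  have hsmull : ∀ (x : G) (a : ℂ) (v w : V), h x (a • v) w = conj a * h x v w := by
    intro x a v w
    rw [hsymh, hsmulh, map_mul, ← hsymh]
  have hmulcont : ∀ x : G, Continuous fun y : G => x * y :=
    fun x => continuous_const.mul continuous_id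
  have hint_tr : ∀ x : G, Integrable (fun y => f y • φ (x * y)) μ := by
    intro x
    refine Continuous.integrable_of_hasCompactSupport
      (hf.smul (hφ.comp (hmulcont x))) ?_
    exact hfsupp.smul_right
  -- Part 1
  have part1 : ∀ (γ : Γ) (x : G),
      (∫ y, f y • φ (((γ : G) * x) * y) ∂μ) =
        (χ γ : V →ₗ[ℂ] V) (∫ y, f y • φ (x * y) ∂μ) := by
    intro γ x
    have hL := (LinearMap.toContinuousLinearMap (χ γ : V →ₗ[ℂ] V)).integral_comp_comm (hint_tr x)
    have e : ∀ y : G, f y • φ (((γ : G) * x) * y)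
        = LinearMap.toContinuousLinearMap (χ γ : V →ₗ[ℂ] V) (f y • φ (x * y)) := by
      intro y
      rw [mul_assoc, hφeq]
      simp
    calc (∫ y, f y • φ (((γ : G) * x) * y) ∂μ)
        = ∫ y, LinearMap.toContinuousLinearMap (χ γ : V →ₗ[ℂ] V) (f y • φ (x * y)) ∂μ := by
          simp_rw [e]
      _ = (χ γ : V →ₗ[ℂ] V) (∫ y, f y • φ (x * y) ∂μ) := by rw [hL]; simp
  refine ⟨part1, ?_⟩
  -- Part 2
  set I : G → V := fun x => ∫ y, f y • φ (x * y) ∂μ with hIdef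
  set W : G → ℝ := fun x => (h x (φ x) (φ x)).re with hWdef
  set a : G → ℝ := fun x => (h x (I x) (I x)).re with hadef
  show Real.sqrt (∫ x in F, a x ∂μ) ≤
      (∫ g, ‖f g‖ * Real.sqrt (ψ g) ∂μ) * Real.sqrt (∫ x in F, W x ∂μ)
  have hA_nonneg : 0 ≤ ∫ x in F, W x ∂μ := integral_nonneg fun x => hnn x (φ x)
  have hC_nonneg : 0 ≤ (∫ g, ‖f g‖ * Real.sqrt (ψ g) ∂μ) *
      Real.sqrt (∫ x in F, W x ∂μ) :=
    mul_nonneg (integral_nonneg fun g => mul_nonneg (norm_nonneg _) (Real.sqrt_nonneg _))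
      (Real.sqrt_nonneg _)
  by_cases hB_int : IntegrableOn a F μ
  swap
  · rw [integral_undef hB_int, Real.sqrt_zero]
    exact hC_nonneg
  have hB_nonneg : 0 ≤ ∫ x in F, a x ∂μ := integral_nonneg fun x => hnn x (I x)
  rcases eq_or_lt_of_le hB_nonneg with hB0 | hBpos
  · rw [← hB0, Real.sqrt_zero]
    exact hC_nonneg
  set B : ℝ := ∫ x in F, a x ∂μ with hBdef
  -- measurability
  have hImeas : StronglyMeasurable I := by
    have hc : Continuous fun p : G × G => f p.2 • φ (p.1 * p.2) :=
      (hf.comp continuous_snd).smul (hφ.comp continuous_mul)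
    exact hc.stronglyMeasurable.integral_prod_right'
  have ha_meas : StronglyMeasurable a := by
    have hm : StronglyMeasurable fun x => (x, (I x, I x)) :=
      stronglyMeasurable_id.prodMk (hImeas.prodMk hImeas)
    exact Complex.continuous_re.comp_stronglyMeasurable (hcont.comp_stronglyMeasurable hm)
  -- domination of h x by h (x * g)
  have hdom : ∀ g : G, ∃ c : ℝ, 0 ≤ c ∧
      ∀ (x : G) (u : V), (h x u u).re ≤ c * (h (x * g) u u).re := by
    intro g
    obtain ⟨C, hCcomp, hCcover⟩ := hcocompact
    obtain ⟨γ₁, hγ₁, hγ₁C⟩ := hCcover 1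
    have hCne : C.Nonempty := ⟨γ₁ * 1, hγ₁C⟩
    have hSne : (Metric.sphere (0 : V) 1).Nonempty := NormedSpace.sphere_nonempty.mpr zero_le_one
    have hScomp : IsCompact (Metric.sphere (0 : V) 1) := isCompact_sphere 0 1
    have hprodne : (C ×ˢ Metric.sphere (0 : V) 1).Nonempty := hCne.prod hSne
    have hprodcomp : IsCompact (C ×ˢ Metric.sphere (0 : V) 1) := hCcomp.prod hScomp
    have hnumc : Continuous fun p : G × V => (h p.1 p.2 p.2).re :=
      Complex.continuous_re.comp
        (hcont.comp (continuous_fst.prodMk (continuous_snd.prodMk continuous_snd)))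
    have hdenc : Continuous fun p : G × V => (h (p.1 * g) p.2 p.2).re :=
      Complex.continuous_re.comp
        (hcont.comp ((continuous_fst.mul continuous_const).prodMk
          (continuous_snd.prodMk continuous_snd)))
    obtain ⟨pM, hpM, hM⟩ := hprodcomp.exists_isMaxOn hprodne hnumc.continuousOn
    obtain ⟨pm, hpm, hm⟩ := hprodcomp.exists_isMinOn hprodne hdenc.continuousOn
    set M : ℝ := (h pM.1 pM.2 pM.2).re with hMdef
    set m : ℝ := (h (pm.1 * g) pm.2 pm.2).re with hmdef
    have hpm2 : pm.2 ∈ Metric.sphere (0 : V) 1 := (Set.mem_prod.mp hpm).2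
    have hmpos : 0 < m := by
      apply hposh
      intro h0
      rw [h0] at hpm2
      simp at hpm2
    have hMnn : 0 ≤ M := hnn pM.1 pM.2
    refine ⟨M / m, div_nonneg hMnn hmpos.le, ?_⟩
    intro x u
    rcases eq_or_ne u 0 with rfl | hu
    · simp [hzero]
    obtain ⟨γ, hγΓ, hγC⟩ := hCcover x
    set γ' : Γ := ⟨γ, hγΓ⟩ with hγ'def
    set w : V := (χ γ' : V →ₗ[ℂ] V) u with hwdef
    have hw0 : w ≠ 0 := by
      intro hw
      apply hu
      calc u = ((χ γ')⁻¹ : (V →ₗ[ℂ] V)ˣ).1 w := by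
            rw [hwdef, ← Module.End.mul_apply, Units.inv_mul, Module.End.one_apply]
      _ = 0 := by rw [hw]; simp
    set r : ℝ := ‖w‖ with hrdef
    have hrpos : 0 < r := norm_pos_iff.mpr hw0
    set w₀ : V := ((r : ℂ))⁻¹ • w with hw₀def
    have hw₀S : w₀ ∈ Metric.sphere (0 : V) 1 := by
      simp only [mem_sphere_iff_norm, sub_zero, hw₀def, norm_smul, norm_inv,
        Complex.norm_real, Real.norm_eq_abs, abs_of_pos hrpos]
      rw [← hrdef]
      field_simp
    have hw_eq : w = ((r : ℂ)) • w₀ := by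
      rw [hw₀def, smul_smul, mul_inv_cancel₀ (by exact_mod_cast hrpos.ne'), one_smul]
    have hscale : ∀ z : G, (h z w w).re = r ^ 2 * (h z w₀ w₀).re := by
      intro z
      rw [hw_eq, hsmull, hsmulh, Complex.conj_ofReal]
      rw [show ((r : ℂ) * ((r : ℂ) * h z w₀ w₀)) = ((r ^ 2 : ℝ) : ℂ) * h z w₀ w₀ by
        push_cast; ring]
      rw [Complex.re_ofReal_mul]
    have hx1 : (h x u u).re = r ^ 2 * (h (γ * x) w₀ w₀).re := by
      have he := hequivh γ' x u u
      rw [← he]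
      exact hscale _
    have hx2 : (h (x * g) u u).re = r ^ 2 * (h ((γ * x) * g) w₀ w₀).re := by
      have he := hequivh γ' (x * g) u u
      rw [← he, ← mul_assoc]
      exact hscale _
    have hmem : ((γ * x, w₀) : G × V) ∈ C ×ˢ Metric.sphere (0 : V) 1 :=
      Set.mem_prod.mpr ⟨hγC, hw₀S⟩
    have hb1 : (h (γ * x) w₀ w₀).re ≤ M := hM hmem
    have hb2 : m ≤ (h ((γ * x) * g) w₀ w₀).re := hm hmem
    rw [hx1, hx2]
    have h2 : r ^ 2 * M = M / m * (r ^ 2 * m) := by field_simp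
    have h1 : r ^ 2 * (h (γ * x) w₀ w₀).re ≤ r ^ 2 * M :=
      mul_le_mul_of_nonneg_left hb1 (sq_nonneg r)
    have h3 : M / m * (r ^ 2 * m) ≤ M / m * (r ^ 2 * (h ((γ * x) * g) w₀ w₀).re) := by
      apply mul_le_mul_of_nonneg_left _ (div_nonneg hMnn hmpos.le)
      exact mul_le_mul_of_nonneg_left hb2 (sq_nonneg r)
    linarith
  -- fundamental domain translation invariance
  haveI : Countable Γ := TopologicalSpace.separableSpace_iff_countable.mp inferInstance
  have hWinv : ∀ (γ : Γ) (x : G), W ((γ : G) * x) = W x := by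
    intro γ x
    show (h ((γ : G) * x) (φ ((γ : G) * x)) (φ ((γ : G) * x))).re = (h x (φ x) (φ x)).re
    rw [hφeq, hequivh]
  have hA_lint : ∫⁻ x in F, ENNReal.ofReal (W x) ∂μ = ENNReal.ofReal (∫ x in F, W x ∂μ) :=
    (ofReal_integral_eq_lintegral_ofReal hφL2
      (Filter.Eventually.of_forall fun x => hnn x (φ x))).symm
  haveI : SMulCommClass Gᵐᵒᵖ Γ G := ⟨fun mo γ x => by
    show mo • ((γ : G) * x) = (γ : G) * (mo • x)
    simp only [MulOpposite.smul_eq_mul_unop, mul_assoc]⟩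
  have hshift : ∀ g : G, ∫⁻ x in F, ENNReal.ofReal (W (x * g)) ∂μ
      = ∫⁻ x in F, ENNReal.ofReal (W x) ∂μ := by
    intro g
    have hFg : IsFundamentalDomain Γ ((MulOpposite.op g) • F) μ :=
      hF.smul_of_comm (MulOpposite.op g)
    have hmp : MeasurePreserving (fun x : G => x * g) μ μ := measurePreserving_mul_right μ g
    have hemb : MeasurableEmbedding (fun x : G => x * g) :=
      (MeasurableEquiv.mulRight g).measurableEmbedding
    have hpre : (fun x : G => x * g) ⁻¹' ((MulOpposite.op g) • F) = F := by
      ext x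
      constructor
      · rintro hx
        obtain ⟨z, hz, hzx⟩ := hx
        have : z = x := by
          have : z * g = x * g := hzx
          exact mul_right_cancel this
        rwa [← this]
      · intro hx
        exact ⟨x, hx, rfl⟩
    calc ∫⁻ x in F, ENNReal.ofReal (W (x * g)) ∂μ
        = ∫⁻ z in (MulOpposite.op g) • F, ENNReal.ofReal (W z) ∂μ := by
          have heq := hmp.setLIntegral_comp_preimage_emb hemb
            (fun z => ENNReal.ofReal (W z)) ((MulOpposite.op g) • F)
          rw [hpre] at heq
          exact heq
      _ = ∫⁻ x in F, ENNReal.ofReal (W x) ∂μ :=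
          hFg.setLIntegral_eq hF _ (fun γ x => congrArg ENNReal.ofReal (hWinv γ x))
  -- translates are square integrable on F
  have hWtr_cont : ∀ g : G, Continuous fun x => (h x (φ (x * g)) (φ (x * g))).re := by
    intro g
    exact Complex.continuous_re.comp (hcont.comp (continuous_id.prodMk
      (((hφ.comp (continuous_id.mul continuous_const))).prodMk
        (hφ.comp (continuous_id.mul continuous_const)))))
  have hWtr_lint : ∀ g : G, ∫⁻ x in F, ENNReal.ofReal ((h x (φ (x * g)) (φ (x * g))).re) ∂μ < ⊤ := by
    intro g
    obtain ⟨c, hc0, hc⟩ := hdom g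
    have hle : ∫⁻ x in F, ENNReal.ofReal ((h x (φ (x * g)) (φ (x * g))).re) ∂μ
        ≤ ∫⁻ x in F, ENNReal.ofReal c * ENNReal.ofReal (W (x * g)) ∂μ := by
      refine lintegral_mono fun x => ?_
      calc ENNReal.ofReal ((h x (φ (x * g)) (φ (x * g))).re)
          ≤ ENNReal.ofReal (c * W (x * g)) := ENNReal.ofReal_le_ofReal (hc x (φ (x * g)))
        _ = ENNReal.ofReal c * ENNReal.ofReal (W (x * g)) := ENNReal.ofReal_mul hc0
    rw [lintegral_const_mul' _ _ ENNReal.ofReal_ne_top, hshift g, hA_lint] at hle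
    exact lt_of_le_of_lt hle (ENNReal.mul_lt_top ENNReal.ofReal_lt_top ENNReal.ofReal_lt_top)
  have hWtr_int : ∀ g : G, IntegrableOn (fun x => (h x (φ (x * g)) (φ (x * g))).re) F μ := by
    intro g
    refine ⟨(hWtr_cont g).aestronglyMeasurable, ?_⟩
    rw [hasFiniteIntegral_iff_ofReal (Filter.Eventually.of_forall fun x => hnn x (φ (x * g)))]
    exact hWtr_lint g
  -- pointwise bound (step A)
  have hq_cont : ∀ x : G, Continuous fun y => ‖f y‖ *
      (Real.sqrt (a x) * Real.sqrt ((h x (φ (x * y)) (φ (x * y))).re)) := by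
    intro x
    refine (continuous_norm.comp hf).mul (continuous_const.mul ?_)
    exact Real.continuous_sqrt.comp (Complex.continuous_re.comp (hcont.comp
      (continuous_const.prodMk (((hφ.comp (hmulcont x))).prodMk (hφ.comp (hmulcont x))))))
  have hq_int : ∀ x : G, Integrable (fun y => ‖f y‖ *
      (Real.sqrt (a x) * Real.sqrt ((h x (φ (x * y)) (φ (x * y))).re))) μ := by
    intro x
    refine Continuous.integrable_of_hasCompactSupport (hq_cont x) ?_
    apply HasCompactSupport.mul_right
    exact hfsupp.comp_left (g := fun z : ℂ => ‖z‖) norm_zero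
  have hstepA : ∀ x : G, a x ≤ ∫ y, ‖f y‖ *
      (Real.sqrt (a x) * Real.sqrt ((h x (φ (x * y)) (φ (x * y))).re)) ∂μ := by
    intro x
    have hlin : IsLinearMap ℂ fun w => h x (I x) w :=
      ⟨haddh x (I x), fun c w => by rw [hsmulh]; rfl⟩
    set L : V →L[ℂ] ℂ := LinearMap.toContinuousLinearMap (IsLinearMap.mk' _ hlin) with hLdef
    have hLa : ∀ w, L w = h x (I x) w := fun w => rfl
    have hint2 : Integrable (fun y => f y * h x (I x) (φ (x * y))) μ := by
      refine Continuous.integrable_of_hasCompactSupport ?_ hfsupp.mul_right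
      exact hf.mul ((hcont.comp (continuous_const.prodMk
        (continuous_const.prodMk (hφ.comp (hmulcont x))))))
    have e1 : h x (I x) (I x) = ∫ y, f y * h x (I x) (φ (x * y)) ∂μ := by
      have hcomm := L.integral_comp_comm (hint_tr x)
      calc h x (I x) (I x) = L (I x) := (hLa _).symm
      _ = ∫ y, L (f y • φ (x * y)) ∂μ := hcomm.symm
      _ = ∫ y, f y * h x (I x) (φ (x * y)) ∂μ := by
          congr 1
          funext y
          rw [hLa, hsmulh]
    have e2 : a x = ∫ y, (f y * h x (I x) (φ (x * y))).re ∂μ := by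
      have hre := Complex.reCLM.integral_comp_comm hint2
      simp only [Complex.reCLM_apply] at hre
      rw [show a x = (h x (I x) (I x)).re from rfl, e1, ← hre]
    have hpoint : ∀ y : G, (f y * h x (I x) (φ (x * y))).re ≤ ‖f y‖ *
        (Real.sqrt (a x) * Real.sqrt ((h x (φ (x * y)) (φ (x * y))).re)) := by
      intro y
      calc (f y * h x (I x) (φ (x * y))).re
          ≤ ‖f y * h x (I x) (φ (x * y))‖ := Complex.re_le_norm _
        _ = ‖f y‖ * ‖h x (I x) (φ (x * y))‖ := norm_mul _ _
        _ ≤ ‖f y‖ *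
            (Real.sqrt (a x) * Real.sqrt ((h x (φ (x * y)) (φ (x * y))).re)) :=
            mul_le_mul_of_nonneg_left (hCS x (I x) (φ (x * y))) (norm_nonneg _)
    calc a x = ∫ y, (f y * h x (I x) (φ (x * y))).re ∂μ := e2
      _ ≤ ∫ y, ‖f y‖ *
          (Real.sqrt (a x) * Real.sqrt ((h x (φ (x * y)) (φ (x * y))).re)) ∂μ :=
          integral_mono hint2.re (hq_int x) hpoint
  -- B in ENNReal
  have hB_lint : ∫⁻ x in F, ENNReal.ofReal (a x) ∂μ = ENNReal.ofReal B :=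
    (ofReal_integral_eq_lintegral_ofReal hB_int
      (Filter.Eventually.of_forall fun x => hnn x (I x))).symm
  have hsq : ∀ t : ℝ, 0 ≤ t → ENNReal.ofReal (Real.sqrt t) ^ (2 : ℝ) = ENNReal.ofReal t := by
    intro t ht
    rw [ENNReal.ofReal_rpow_of_nonneg (Real.sqrt_nonneg t) (by norm_num)]
    congr 1
    rw [show (2 : ℝ) = ((2 : ℕ) : ℝ) by norm_num, Real.rpow_natCast, sq, Real.mul_self_sqrt ht]
  have hsqrt_ofReal : ∀ t : ℝ, 0 ≤ t →
      ENNReal.ofReal t ^ (1 / 2 : ℝ) = ENNReal.ofReal (Real.sqrt t) := by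
    intro t ht
    rw [Real.sqrt_eq_rpow, ← ENNReal.ofReal_rpow_of_nonneg ht (by norm_num)]
  -- Hölder step
  have hHolder : ∀ y : G,
      (∫⁻ x in F, ENNReal.ofReal (Real.sqrt (a x)) *
          ENNReal.ofReal (Real.sqrt ((h x (φ (x * y)) (φ (x * y))).re)) ∂μ)
        ≤ ENNReal.ofReal (Real.sqrt B) *
          ENNReal.ofReal (Real.sqrt (ψ y) * Real.sqrt (∫ x in F, W x ∂μ)) := by
    intro y
    have hconj : Real.HolderConjugate 2 2 := Real.HolderConjugate.two_two
    have hmf : AEMeasurable (fun x => ENNReal.ofReal (Real.sqrt (a x))) (μ.restrict F) :=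
      (ENNReal.measurable_ofReal.comp
        (Real.continuous_sqrt.measurable.comp ha_meas.measurable)).aemeasurable
    have hmg : AEMeasurable (fun x => ENNReal.ofReal
        (Real.sqrt ((h x (φ (x * y)) (φ (x * y))).re))) (μ.restrict F) :=
      (ENNReal.measurable_ofReal.comp
        ((Real.continuous_sqrt.comp (hWtr_cont y)).measurable)).aemeasurable
    have hH := ENNReal.lintegral_mul_le_Lp_mul_Lq (μ.restrict F) hconj hmf hmg
    have e1 : ∫⁻ x in F, ENNReal.ofReal (Real.sqrt (a x)) ^ (2:ℝ) ∂μ = ENNReal.ofReal B := by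
      rw [← hB_lint]
      exact lintegral_congr fun x => hsq (a x) (hnn x (I x))
    have e2 : ∫⁻ x in F, ENNReal.ofReal
        (Real.sqrt ((h x (φ (x * y)) (φ (x * y))).re)) ^ (2:ℝ) ∂μ
        = ENNReal.ofReal (∫ x in F, (h x (φ (x * y)) (φ (x * y))).re ∂μ) := by
      rw [ofReal_integral_eq_lintegral_ofReal (hWtr_int y)
        (Filter.Eventually.of_forall fun x => hnn x (φ (x * y)))]
      exact lintegral_congr fun x => hsq _ (hnn x (φ (x * y)))
    calc (∫⁻ x in F, ENNReal.ofReal (Real.sqrt (a x)) *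
          ENNReal.ofReal (Real.sqrt ((h x (φ (x * y)) (φ (x * y))).re)) ∂μ)
        ≤ (∫⁻ x in F, ENNReal.ofReal (Real.sqrt (a x)) ^ (2:ℝ) ∂μ) ^ (1/2 : ℝ) *
          (∫⁻ x in F, ENNReal.ofReal
            (Real.sqrt ((h x (φ (x * y)) (φ (x * y))).re)) ^ (2:ℝ) ∂μ) ^ (1/2 : ℝ) := hH
      _ = ENNReal.ofReal B ^ (1/2 : ℝ) *
          ENNReal.ofReal (∫ x in F, (h x (φ (x * y)) (φ (x * y))).re ∂μ) ^ (1/2 : ℝ) := by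
          rw [e1, e2]
      _ ≤ ENNReal.ofReal B ^ (1/2 : ℝ) *
          ENNReal.ofReal (ψ y * ∫ x in F, W x ∂μ) ^ (1/2 : ℝ) := by
          apply mul_le_mul_right
          apply ENNReal.rpow_le_rpow _ (by norm_num)
          exact ENNReal.ofReal_le_ofReal (hψdom y φ hφ hφeq)
      _ = ENNReal.ofReal (Real.sqrt B) *
          ENNReal.ofReal (Real.sqrt (ψ y) * Real.sqrt (∫ x in F, W x ∂μ)) := by
          rw [hsqrt_ofReal B hB_nonneg]
          congr 1
          rw [← Real.sqrt_mul' (ψ y) hA_nonneg]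
          rcases le_or_gt 0 (ψ y * ∫ x in F, W x ∂μ) with hpa | hpa
          · exact hsqrt_ofReal _ hpa
          · rw [ENNReal.ofReal_of_nonpos hpa.le, ENNReal.zero_rpow_of_pos (by norm_num),
              Real.sqrt_eq_zero_of_nonpos hpa.le, ENNReal.ofReal_zero]
  -- joint measurability for Fubini
  have hw_contJ : Continuous fun p : G × G => (h p.1 (φ (p.1 * p.2)) (φ (p.1 * p.2))).re :=
    Complex.continuous_re.comp (hcont.comp (continuous_fst.prodMk
      ((hφ.comp continuous_mul).prodMk (hφ.comp continuous_mul))))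
  have hprod_meas : AEMeasurable (Function.uncurry fun x y => ENNReal.ofReal
      (‖f y‖ * (Real.sqrt (a x) *
        Real.sqrt ((h x (φ (x * y)) (φ (x * y))).re)))) ((μ.restrict F).prod μ) := by
    apply Measurable.aemeasurable
    show Measurable fun p : G × G => ENNReal.ofReal (‖f p.2‖ * (Real.sqrt (a p.1) *
      Real.sqrt ((h p.1 (φ (p.1 * p.2)) (φ (p.1 * p.2))).re)))
    apply ENNReal.measurable_ofReal.comp
    apply Measurable.mul
    · exact (continuous_norm.comp (hf.comp continuous_snd)).measurable
    apply Measurable.mul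
    · exact Real.continuous_sqrt.measurable.comp (ha_meas.measurable.comp measurable_fst)
    · exact (Real.continuous_sqrt.comp hw_contJ).measurable
  -- integrability of the final RHS integrand
  have hfinal_int : Integrable (fun y => ‖f y‖ *
      (Real.sqrt (ψ y) * Real.sqrt (∫ x in F, W x ∂μ))) μ := by
    refine Continuous.integrable_of_hasCompactSupport ?_ ?_
    · exact (continuous_norm.comp hf).mul
        ((Real.continuous_sqrt.comp hψ).mul continuous_const)
    · exact (hfsupp.comp_left (g := fun z : ℂ => ‖z‖) norm_zero).mul_right
  -- main chain
  have hmain : ENNReal.ofReal B ≤ ENNReal.ofReal (Real.sqrt B) *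
      ENNReal.ofReal ((∫ g', ‖f g'‖ * Real.sqrt (ψ g') ∂μ) *
        Real.sqrt (∫ x in F, W x ∂μ)) := by
    calc ENNReal.ofReal B = ∫⁻ x in F, ENNReal.ofReal (a x) ∂μ := hB_lint.symm
      _ ≤ ∫⁻ x in F, ENNReal.ofReal (∫ y, ‖f y‖ * (Real.sqrt (a x) *
            Real.sqrt ((h x (φ (x * y)) (φ (x * y))).re)) ∂μ) ∂μ :=
          lintegral_mono fun x => ENNReal.ofReal_le_ofReal (hstepA x)
      _ = ∫⁻ x in F, ∫⁻ y, ENNReal.ofReal (‖f y‖ * (Real.sqrt (a x) *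
            Real.sqrt ((h x (φ (x * y)) (φ (x * y))).re))) ∂μ ∂μ := by
          apply lintegral_congr
          intro x
          rw [ofReal_integral_eq_lintegral_ofReal (hq_int x) (Filter.Eventually.of_forall
            fun y => mul_nonneg (norm_nonneg _)
              (mul_nonneg (Real.sqrt_nonneg _) (Real.sqrt_nonneg _)))]
      _ = ∫⁻ y, ∫⁻ x in F, ENNReal.ofReal (‖f y‖ * (Real.sqrt (a x) *
            Real.sqrt ((h x (φ (x * y)) (φ (x * y))).re))) ∂μ ∂μ :=
          lintegral_lintegral_swap hprod_meas
      _ = ∫⁻ y, ENNReal.ofReal (‖f y‖) * ∫⁻ x in F,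
            ENNReal.ofReal (Real.sqrt (a x)) *
            ENNReal.ofReal (Real.sqrt ((h x (φ (x * y)) (φ (x * y))).re)) ∂μ ∂μ := by
          apply lintegral_congr
          intro y
          rw [← lintegral_const_mul' _ _ ENNReal.ofReal_ne_top]
          apply lintegral_congr
          intro x
          rw [← ENNReal.ofReal_mul (Real.sqrt_nonneg _),
            ← ENNReal.ofReal_mul (norm_nonneg _)]
      _ ≤ ∫⁻ y, ENNReal.ofReal (‖f y‖) * (ENNReal.ofReal (Real.sqrt B) *
            ENNReal.ofReal (Real.sqrt (ψ y) * Real.sqrt (∫ x in F, W x ∂μ))) ∂μ :=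
          lintegral_mono fun y => mul_le_mul_right (hHolder y) _
      _ = ENNReal.ofReal (Real.sqrt B) * ∫⁻ y, ENNReal.ofReal (‖f y‖ *
            (Real.sqrt (ψ y) * Real.sqrt (∫ x in F, W x ∂μ))) ∂μ := by
          rw [← lintegral_const_mul' _ _ ENNReal.ofReal_ne_top]
          apply lintegral_congr
          intro y
          rw [ENNReal.ofReal_mul (norm_nonneg _)]
          ring
      _ = ENNReal.ofReal (Real.sqrt B) * ENNReal.ofReal (∫ y, ‖f y‖ *
            (Real.sqrt (ψ y) * Real.sqrt (∫ x in F, W x ∂μ)) ∂μ) := by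
          rw [ofReal_integral_eq_lintegral_ofReal hfinal_int (Filter.Eventually.of_forall
            fun y => mul_nonneg (norm_nonneg _)
              (mul_nonneg (Real.sqrt_nonneg _) (Real.sqrt_nonneg _)))]
      _ = ENNReal.ofReal (Real.sqrt B) *
          ENNReal.ofReal ((∫ g', ‖f g'‖ * Real.sqrt (ψ g') ∂μ) *
            Real.sqrt (∫ x in F, W x ∂μ)) := by
          congr 1
          rw [show (fun y => ‖f y‖ * (Real.sqrt (ψ y) *
              Real.sqrt (∫ x in F, W x ∂μ))) = fun y => (‖f y‖ * Real.sqrt (ψ y)) *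
              Real.sqrt (∫ x in F, W x ∂μ) by funext y; ring]
          rw [integral_mul_const]
  -- conclude
  have hsqB_pos : 0 < Real.sqrt B := Real.sqrt_pos.mpr hBpos
  have h1 : ENNReal.ofReal B = ENNReal.ofReal (Real.sqrt B) * ENNReal.ofReal (Real.sqrt B) := by
    rw [← ENNReal.ofReal_mul (Real.sqrt_nonneg _), Real.mul_self_sqrt hB_nonneg]
  rw [h1] at hmain
  have h2 : ENNReal.ofReal (Real.sqrt B) ≠ 0 := by
    simp only [ne_eq, ENNReal.ofReal_eq_zero, not_le]
    exact hsqB_pos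
  have h4 : ENNReal.ofReal (Real.sqrt B) ≤ ENNReal.ofReal
      ((∫ g', ‖f g'‖ * Real.sqrt (ψ g') ∂μ) * Real.sqrt (∫ x in F, W x ∂μ)) :=
    (ENNReal.mul_le_mul_iff_right h2 ENNReal.ofReal_ne_top).mp hmain
  exact (ENNReal.ofReal_le_ofReal_iff hC_nonneg).mp h4
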